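/- Assume κ is UD-self-dual, 𝗊² : P → ℂ satisfies the Kerov condition with parameter t, and t ∉ {0, −1, −2, …}. Define M_n(λ) := (dim λ)² (∏_{□∈λ} 𝗊²(□)) / (n!(t)_n) for λ ∈ 𝔾_n, where (t)_n := t(t+1)⋯(t+n−1). Then: (a) Σ_{λ∈𝔾_n} M_n(λ) = 1 for every n ≥ 0; and (b) (coherency) for every n ≥ 0 and every λ ∈ 𝔾_n, Σ_{ν : ν ↘ λ} M_{n+1}(ν) · κ(λ,ν) dim λ / dim ν = M_n(λ). -/

import Mathlib

open scoped BigOperators Classical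

namespace IdealGraph

variable {P : Type*} [PartialOrder P]

/-- A finite order ideal of the poset `P`, encoded as a down-closed `Finset`. -/
def IsIdealF (s : Finset P) : Prop := ∀ ⦃x⦄, x ∈ s → ∀ ⦃y⦄, y ≤ x → y ∈ s

/-- The vertex set of the branching graph of ideals `𝔾 = J(P)`. -/
abbrev G (P : Type*) [PartialOrder P] := {s : Finset P // IsIdealF s}

/-- The `n`-th level `𝔾_n` of the branching graph. -/
abbrev Lvl (P : Type*) [PartialOrder P] (n : ℕ) := {s : Finset P // IsIdealF s ∧ s.card = n}

/-- `CoversF μ l` : `μ ↗ l` is an edge of the branching graph of ideals. -/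
def CoversF (μ l : Finset P) : Prop :=
  IsIdealF μ ∧ IsIdealF l ∧ μ ⊆ l ∧ l.card = μ.card + 1

/-- All levels `𝔾_n` of the graph are finite. -/
def LevelsFinite (P : Type*) [PartialOrder P] : Prop :=
  ∀ n : ℕ, {s : Finset P | IsIdealF s ∧ s.card = n}.Finite

/-- An edge multiplicity function is (strictly) positive on all edges. -/
def EdgePositive (κ : Finset P → Finset P → ℝ) : Prop :=
  ∀ μ l, CoversF μ l → 0 < κ μ l

/-- UD-self-duality of a multiplicity function: for every quadrangle `μ ρ ν λ`. -/
def UDSelfDual (κ : Finset P → Finset P → ℝ) : Prop :=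
  ∀ μ ρ l ν : Finset P, CoversF μ ρ → CoversF ρ ν → CoversF μ l → CoversF l ν →
    ρ ≠ l → κ μ l * κ μ ρ = κ l ν * κ ρ ν

/-- The value of a function `q : P → R` on the box `l ∖ μ` of an edge `μ ↗ l`. -/
noncomputable def bx {R : Type*} [AddCommMonoid R] (q : P → R) (μ l : Finset P) : R :=
  ∑ x ∈ l \ μ, q x

/-- The Kerov condition with parameter `t` for the function `q2 = 𝗊²`. -/
def KerovCond (κ : Finset P → Finset P → ℝ) (q2 : P → ℂ) (t : ℂ) : Prop :=
  ∀ l : Finset P, IsIdealF l →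
    (∑' ν : {ν : Finset P // CoversF l ν}, (κ l ν.1 : ℂ) ^ 2 * bx q2 l ν.1) -
      (∑' μ : {μ : Finset P // CoversF μ l}, (κ μ.1 l : ℂ) ^ 2 * bx q2 μ.1 l)
      = 2 * (l.card : ℂ) + t

/-- Weighted number of saturated chains of length `n` from the ideal `μ` up to the ideal `l`. -/
noncomputable def dimRel (κ : Finset P → Finset P → ℝ) : ℕ → Finset P → Finset P → ℝ
  | 0, μ, l => if μ = l then 1 else 0
  | n + 1, μ, l =>
      ∑ x ∈ l, if CoversF (l.erase x) l ∧ μ ⊆ l.erase x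
        then κ (l.erase x) l * dimRel κ n μ (l.erase x) else 0

/-- Relative dimension `dim(μ, l)`. -/
noncomputable def dimI (κ : Finset P → Finset P → ℝ) (μ l : Finset P) : ℝ :=
  dimRel κ (l.card - μ.card) μ l

/-- Dimension `dim l = dim(∅, l)`. -/
noncomputable def dimT (κ : Finset P → Finset P → ℝ) (l : Finset P) : ℝ :=
  dimI κ ∅ l

/-- The relative dimension function `P*_μ`. -/
noncomputable def Pstar (κ : Finset P → Finset P → ℝ) (μ l : Finset P) : ℝ :=
  (l.card.descFactorial μ.card : ℝ) * dimI κ μ l / dimT κ l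

/-- The mixed measure `M_ξ`. -/
noncomputable def Mxi (κ : Finset P → Finset P → ℝ) (q : P → ℝ) (t ξ : ℝ) (l : Finset P) : ℝ :=
  (1 - ξ) ^ t * ξ ^ l.card * (dimT κ l / (Nat.factorial l.card : ℝ)) ^ 2 * ∏ x ∈ l, q x ^ 2

/-- The coherent measure `M_n(l)` (for `n = |l|`). -/
noncomputable def Mcoh (κ : Finset P → Finset P → ℝ) (q : P → ℝ) (t : ℝ) (l : Finset P) : ℝ :=
  dimT κ l ^ 2 * (∏ x ∈ l, q x ^ 2) /
    ((Nat.factorial l.card : ℝ) * Polynomial.eval t (ascPochhammer ℝ l.card))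

/-- The jump rates `Q(l, ρ)` of the Markov jump dynamics. -/
noncomputable def Qrate (κ : Finset P → Finset P → ℝ) (q : P → ℝ) (t ξ : ℝ)
    (l ρ : Finset P) : ℝ :=
  if CoversF ρ l then (1 - ξ)⁻¹ * l.card * (κ ρ l * dimT κ ρ / dimT κ l)
  else if CoversF l ρ then
    (1 - ξ)⁻¹ * (ξ * ((l.card : ℝ) + t)) *
      ((Mcoh κ q t ρ / Mcoh κ q t l) * (κ l ρ * dimT κ l / dimT κ ρ))
  else if ρ = l then -((1 - ξ)⁻¹ * ((l.card : ℝ) + ξ * ((l.card : ℝ) + t)))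
  else 0

/-- The function `𝔐_l`. -/
noncomputable def Mfrak (κ : Finset P → Finset P → ℝ) (q : P → ℝ) (ξ : ℝ)
    (l ν : Finset P) : ℝ :=
  ∑ μ ∈ l.powerset.filter (fun s => IsIdealF s),
    (ξ / (ξ - 1)) ^ (l.card - μ.card) *
      (dimI κ μ l / (Nat.factorial (l.card - μ.card) : ℝ)) *
      (∏ x ∈ l \ μ, q x ^ 2) * Pstar κ μ ν

/-- The operator `U` built from `κ` and `q`. -/
noncomputable def Uop (κ : Finset P → Finset P → ℝ) (q : P → ℂ) (f : Finset P → ℂ) :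
    Finset P → ℂ :=
  fun l => ∑' μ : {μ : Finset P // CoversF μ l}, (κ μ.1 l : ℂ) * bx q μ.1 l * f μ.1

/-- The operator `D` built from `κ` and `q`. -/
noncomputable def Dop (κ : Finset P → Finset P → ℝ) (q : P → ℂ) (f : Finset P → ℂ) :
    Finset P → ℂ :=
  fun l => ∑' ν : {ν : Finset P // CoversF l ν}, (κ l ν.1 : ℂ) * bx q l ν.1 * f ν.1

/-- The standard basis vector `δ_l`. -/
noncomputable def delta (l : Finset P) : Finset P → ℂ := fun ρ => if ρ = l then 1 else 0


/-- The (possibly complex-valued) coherent measure `M_n(l)` built from a Kerov triplet. -/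
noncomputable def McohC {P : Type*} [PartialOrder P]
    (κ : Finset P → Finset P → ℝ) (q2 : P → ℂ) (t : ℂ) (l : Finset P) : ℂ :=
  (dimT κ l : ℂ) ^ 2 * (∏ x ∈ l, q2 x) /
    ((Nat.factorial l.card : ℂ) * Polynomial.eval t (ascPochhammer ℂ l.card))

section Aux
variable {P : Type*} [PartialOrder P]

lemma isIdealF_empty : IsIdealF (∅ : Finset P) := by
  intro x hx; simp at hx

lemma isIdealF_inter {s t : Finset P} (hs : IsIdealF s) (ht : IsIdealF t) :
    IsIdealF (s ∩ t) := by
  intro x hx y hy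
  simp only [Finset.mem_inter] at hx ⊢
  exact ⟨hs hx.1 hy, ht hx.2 hy⟩

lemma isIdealF_union {s t : Finset P} (hs : IsIdealF s) (ht : IsIdealF t) :
    IsIdealF (s ∪ t) := by
  intro x hx y hy
  simp only [Finset.mem_union] at hx ⊢
  rcases hx with h | h
  · exact Or.inl (hs h hy)
  · exact Or.inr (ht h hy)

lemma cover_sdiff_card {μ l : Finset P} (h : CoversF μ l) : (l \ μ).card = 1 := by
  rw [Finset.card_sdiff_of_subset h.2.2.1, h.2.2.2]; omega

lemma cover_exists {μ l : Finset P} (h : CoversF μ l) :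
    ∃ x, x ∈ l ∧ x ∉ μ ∧ l \ μ = {x} ∧ l = insert x μ ∧ μ = l.erase x := by
  obtain ⟨x, hx⟩ := Finset.card_eq_one.mp (cover_sdiff_card h)
  have hxl : x ∈ l ∧ x ∉ μ := by
    have : x ∈ l \ μ := hx ▸ Finset.mem_singleton_self x
    exact ⟨(Finset.mem_sdiff.mp this).1, (Finset.mem_sdiff.mp this).2⟩
  refine ⟨x, hxl.1, hxl.2, hx, ?_, ?_⟩
  · apply Finset.eq_of_subset_of_card_le
    · intro y hy
      by_cases hyμ : y ∈ μ
      · exact Finset.mem_insert_of_mem hyμ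
      · have : y ∈ l \ μ := Finset.mem_sdiff.mpr ⟨hy, hyμ⟩
        rw [hx, Finset.mem_singleton] at this
        exact this ▸ Finset.mem_insert_self x μ
    · rw [Finset.card_insert_of_notMem hxl.2, h.2.2.2]
  · apply Finset.eq_of_subset_of_card_le
    · intro y hy
      rw [Finset.mem_erase]
      exact ⟨fun hyx => hxl.2 (hyx ▸ hy), h.2.2.1 hy⟩
    · rw [Finset.card_erase_of_mem hxl.1, h.2.2.2]; omega

lemma bx_eq_single {μ l : Finset P} (h : CoversF μ l) {x : P} (hx : l \ μ = {x})
    (q : P → ℂ) : bx q μ l = q x := by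
  rw [bx, hx, Finset.sum_singleton]

lemma prod_cover (q : P → ℂ) {μ l : Finset P} (h : CoversF μ l) :
    ∏ y ∈ l, q y = (∏ y ∈ μ, q y) * bx q μ l := by
  obtain ⟨x, hxl, hxμ, hsd, hins, -⟩ := cover_exists h
  rw [bx_eq_single h hsd, hins, Finset.prod_insert hxμ, mul_comm]

end Aux
section Aux2
variable {P : Type*} [PartialOrder P]

/-- The finset of covers above `l`. -/
noncomputable def upS (hLF : LevelsFinite P) (l : Finset P) : Finset (Finset P) :=
  (hLF (l.card + 1)).toFinset.filter (fun ν => CoversF l ν)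

/-- The finset of covers below `l`. -/
noncomputable def downS (l : Finset P) : Finset (Finset P) :=
  l.powerset.filter (fun μ => CoversF μ l)

lemma mem_upS {hLF : LevelsFinite P} {l ν : Finset P} :
    ν ∈ upS hLF l ↔ CoversF l ν := by
  simp only [upS, Finset.mem_filter, Set.Finite.mem_toFinset, Set.mem_setOf_eq]
  exact ⟨fun h => h.2, fun h => ⟨⟨h.2.1, h.2.2.2⟩, h⟩⟩

lemma mem_downS {l μ : Finset P} : μ ∈ downS l ↔ CoversF μ l := by
  simp only [downS, Finset.mem_filter, Finset.mem_powerset]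
  exact ⟨fun h => h.2, fun h => ⟨h.2.2.1, h⟩⟩

lemma tsum_finset {p : Finset P → Prop} {s : Finset (Finset P)}
    (hs : ∀ ν, p ν ↔ ν ∈ s) (f : Finset P → ℂ) :
    ∑' ν : {ν : Finset P // p ν}, f ν.1 = ∑ ν ∈ s, f ν := by
  have h1 : ∑' ν : {ν : Finset P // p ν}, f ν.1
      = ∑' ν : Finset P, Set.indicator {ν | p ν} f ν := tsum_subtype {ν | p ν} f
  rw [h1, tsum_eq_sum (s := s) (fun b hb => Set.indicator_of_notMem
    (by simpa using fun h => hb ((hs b).mp h)) f)]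
  exact Finset.sum_congr rfl fun ν hν => Set.indicator_of_mem ((hs ν).mpr hν) f

lemma tsum_up (hLF : LevelsFinite P) (l : Finset P) (f : Finset P → ℂ) :
    ∑' ν : {ν : Finset P // CoversF l ν}, f ν.1 = ∑ ν ∈ upS hLF l, f ν :=
  tsum_finset (fun ν => (mem_upS (hLF := hLF) (l := l) (ν := ν)).symm) f

lemma tsum_down (l : Finset P) (f : Finset P → ℂ) :
    ∑' μ : {μ : Finset P // CoversF μ l}, f μ.1 = ∑ μ ∈ downS l, f μ :=
  tsum_finset (fun μ => (mem_downS (l := l) (μ := μ)).symm) f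

variable (κ : Finset P → Finset P → ℝ)

lemma dimT_empty : dimT κ (∅ : Finset P) = 1 := by
  simp [dimT, dimI, dimRel]

lemma dimT_rec {ν : Finset P} (hν : IsIdealF ν) (hne : ν.Nonempty) :
    dimT κ ν = ∑ μ ∈ downS ν, κ μ ν * dimT κ μ := by
  obtain ⟨m, hm⟩ : ∃ m, ν.card = m + 1 :=
    ⟨ν.card - 1, by have := Finset.card_pos.mpr hne; omega⟩
  have h0 : dimT κ ν = dimRel κ (m + 1) ∅ ν := by
    rw [dimT, dimI, Finset.card_empty, Nat.sub_zero, hm]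
  rw [h0, dimRel]
  have hterm : ∀ x ∈ ν,
      (if CoversF (ν.erase x) ν ∧ ∅ ⊆ ν.erase x
        then κ (ν.erase x) ν * dimRel κ m ∅ (ν.erase x) else 0)
      = if CoversF (ν.erase x) ν then κ (ν.erase x) ν * dimT κ (ν.erase x) else 0 := by
    intro x hx
    by_cases hc : CoversF (ν.erase x) ν
    · rw [if_pos ⟨hc, Finset.empty_subset _⟩, if_pos hc]
      congr 1
      rw [dimT, dimI, Finset.card_empty, Nat.sub_zero, Finset.card_erase_of_mem hx, hm,
        Nat.add_sub_cancel]
    · rw [if_neg (fun h => hc h.1), if_neg hc]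
  rw [Finset.sum_congr rfl hterm, ← Finset.sum_filter]
  apply Finset.sum_bij (i := fun x _ => ν.erase x)
  · intro x hx
    rw [mem_downS]
    exact (Finset.mem_filter.mp hx).2
  · intro x hx y hy hxy
    have hx' := (Finset.mem_filter.mp hx).1
    have hy' := (Finset.mem_filter.mp hy).1
    by_contra hne'
    have hxmem : x ∈ ν.erase y := Finset.mem_erase.mpr ⟨hne', hx'⟩
    rw [← hxy] at hxmem
    exact Finset.notMem_erase x ν hxmem
  · intro μ hμ
    obtain ⟨x, hxν, hxμ, hsd, hins, herase⟩ := cover_exists (mem_downS.mp hμ)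
    exact ⟨x, Finset.mem_filter.mpr ⟨hxν, herase ▸ mem_downS.mp hμ⟩, herase.symm⟩
  · intro x hx; rfl

end Aux2
section Aux3
variable {P : Type*} [PartialOrder P]

lemma sdiff_union_inter (ρ l : Finset P) : (ρ ∪ l) \ l = ρ \ (ρ ∩ l) := by
  ext x
  simp only [Finset.mem_sdiff, Finset.mem_union, Finset.mem_inter]
  tauto

lemma quad1 {l ν ρ : Finset P} (hν : CoversF l ν) (hρ : CoversF ρ ν) (hne : ρ ≠ l) :
    ν = ρ ∪ l ∧ CoversF (ρ ∩ l) ρ ∧ CoversF (ρ ∩ l) l := by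
  have hc1 : ν.card = l.card + 1 := hν.2.2.2
  have hc2 : ν.card = ρ.card + 1 := hρ.2.2.2
  have hul : ρ ∪ l ⊆ ν := Finset.union_subset hρ.2.2.1 hν.2.2.1
  have hcu : (ρ ∪ l).card ≤ ν.card := Finset.card_le_card hul
  have hlu : l.card ≤ (ρ ∪ l).card := Finset.card_le_card Finset.subset_union_right
  have hcune : (ρ ∪ l).card ≠ l.card := by
    intro h
    have : l = ρ ∪ l :=
      Finset.eq_of_subset_of_card_le Finset.subset_union_right (le_of_eq h)
    exact hne (Finset.eq_of_subset_of_card_le (this ▸ Finset.subset_union_left)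
      (by omega))
  have hνeq : ν = ρ ∪ l :=
    (Finset.eq_of_subset_of_card_le hul (by omega)).symm
  have hcui := Finset.card_union_add_card_inter ρ l
  have hci : (ρ ∩ l).card + 1 = l.card := by
    rw [← hνeq] at hcui; omega
  have hii : IsIdealF (ρ ∩ l) := isIdealF_inter hρ.1 hν.1
  exact ⟨hνeq, ⟨hii, hρ.1, Finset.inter_subset_left, by omega⟩,
    ⟨hii, hν.1, Finset.inter_subset_right, by omega⟩⟩

lemma quad2 {l μ ρ : Finset P} (hμl : CoversF μ l) (hμρ : CoversF μ ρ) (hne : ρ ≠ l) :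
    CoversF l (ρ ∪ l) ∧ CoversF ρ (ρ ∪ l) ∧ μ = ρ ∩ l := by
  have hc1 : l.card = μ.card + 1 := hμl.2.2.2
  have hc2 : ρ.card = μ.card + 1 := hμρ.2.2.2
  have hsub : μ ⊆ ρ ∩ l := Finset.subset_inter hμρ.2.2.1 hμl.2.2.1
  have hcle : (ρ ∩ l).card ≤ ρ.card := Finset.card_le_card Finset.inter_subset_left
  have hcne : (ρ ∩ l).card ≠ ρ.card := by
    intro h
    have hρsub : ρ ⊆ l := by
      have : ρ ∩ l = ρ :=
        Finset.eq_of_subset_of_card_le Finset.inter_subset_left (le_of_eq h.symm)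
      exact this ▸ Finset.inter_subset_right
    exact hne (Finset.eq_of_subset_of_card_le hρsub (by omega))
  have hμle : μ.card ≤ (ρ ∩ l).card := Finset.card_le_card hsub
  have hμeq : μ = ρ ∩ l := Finset.eq_of_subset_of_card_le hsub (by omega)
  have hcui := Finset.card_union_add_card_inter ρ l
  have hcu : (ρ ∪ l).card = μ.card + 2 := by rw [← hμeq] at hcui; omega
  have hiu : IsIdealF (ρ ∪ l) := isIdealF_union hμρ.2.1 hμl.2.1
  exact ⟨⟨hμl.2.1, hiu, Finset.subset_union_right, by omega⟩,
    ⟨hμρ.2.1, hiu, Finset.subset_union_left, by omega⟩, hμeq⟩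

end Aux3
section Main
variable {P : Type*} [PartialOrder P]
variable {κ : Finset P → Finset P → ℝ} {q2 : P → ℂ} {t : ℂ}

lemma key (hLF : LevelsFinite P) (hUD : UDSelfDual κ) (hK : KerovCond κ q2 t) :
    ∀ n : ℕ, ∀ l : Finset P, IsIdealF l → l.card = n →
    ∑ ν ∈ upS hLF l, (κ l ν : ℂ) * bx q2 l ν * (dimT κ ν : ℂ)
      = ((n : ℂ) + 1) * ((n : ℂ) + t) * (dimT κ l : ℂ) := by
  intro n
  induction n using Nat.strong_induction_on with
  | _ n IH =>
  intro l hl hcard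
  classical
  set A : Finset (Finset P) := (hLF n).toFinset with hA
  have memA : ∀ ρ : Finset P, ρ ∈ A ↔ IsIdealF ρ ∧ ρ.card = n := by
    intro ρ; simp [hA, Set.Finite.mem_toFinset]
  -- Kerov condition in finset form
  have hKer : (∑ ν ∈ upS hLF l, (κ l ν : ℂ) ^ 2 * bx q2 l ν)
      - (∑ μ ∈ downS l, (κ μ l : ℂ) ^ 2 * bx q2 μ l) = 2 * (n : ℂ) + t := by
    have h := hK l hl
    rw [tsum_up hLF l (fun ν => (κ l ν : ℂ) ^ 2 * bx q2 l ν),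
      tsum_down l (fun μ => (κ μ l : ℂ) ^ 2 * bx q2 μ l), hcard] at h
    exact h
  -- step 1 : expand dimT ν
  have step1 : ∑ ν ∈ upS hLF l, (κ l ν : ℂ) * bx q2 l ν * (dimT κ ν : ℂ)
      = (∑ ν ∈ upS hLF l, (κ l ν : ℂ) ^ 2 * bx q2 l ν) * (dimT κ l : ℂ)
        + ∑ ν ∈ upS hLF l, ∑ ρ ∈ (downS ν).erase l,
            (κ l ν : ℂ) * (κ ρ ν : ℂ) * bx q2 l ν * (dimT κ ρ : ℂ) := by
    rw [Finset.sum_mul, ← Finset.sum_add_distrib]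
    apply Finset.sum_congr rfl
    intro ν hν
    have hcov : CoversF l ν := mem_upS.mp hν
    have hnem : ν.Nonempty := Finset.card_pos.mp (by rw [hcov.2.2.2]; omega)
    have hrec : (dimT κ ν : ℂ) = ∑ μ ∈ downS ν, (κ μ ν : ℂ) * (dimT κ μ : ℂ) := by
      rw [dimT_rec κ hcov.2.1 hnem]; push_cast; rfl
    rw [hrec, Finset.mul_sum, ← Finset.sum_erase_add _ _ (mem_downS.mpr hcov)]
    have e1 : (κ l ν : ℂ) * bx q2 l ν * ((κ l ν : ℂ) * (dimT κ l : ℂ))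
        = (κ l ν : ℂ) ^ 2 * bx q2 l ν * (dimT κ l : ℂ) := by ring
    rw [e1, add_comm]
    congr 1
    apply Finset.sum_congr rfl
    intro ρ _
    ring
  -- the middle normal form of the cross sum
  have crossA : ∑ ν ∈ upS hLF l, ∑ ρ ∈ (downS ν).erase l,
        (κ l ν : ℂ) * (κ ρ ν : ℂ) * bx q2 l ν * (dimT κ ρ : ℂ)
      = ∑ ρ ∈ A, if CoversF (ρ ∩ l) ρ ∧ CoversF (ρ ∩ l) l ∧ ρ ≠ l
          then (κ (ρ ∩ l) l : ℂ) *
            ((κ (ρ ∩ l) ρ : ℂ) * bx q2 (ρ ∩ l) ρ * (dimT κ ρ : ℂ)) else 0 := by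
    have h1 : ∀ ν ∈ upS hLF l,
        ∑ ρ ∈ (downS ν).erase l, (κ l ν : ℂ) * (κ ρ ν : ℂ) * bx q2 l ν * (dimT κ ρ : ℂ)
        = ∑ ρ ∈ A, if CoversF ρ ν ∧ ρ ≠ l
            then (κ l ν : ℂ) * (κ ρ ν : ℂ) * bx q2 l ν * (dimT κ ρ : ℂ) else 0 := by
      intro ν hν
      have hcov : CoversF l ν := mem_upS.mp hν
      have hset : (downS ν).erase l = A.filter (fun ρ => CoversF ρ ν ∧ ρ ≠ l) := by
        ext ρ
        simp only [Finset.mem_erase, Finset.mem_filter, memA]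
        constructor
        · rintro ⟨hne, hρ⟩
          have hc := mem_downS.mp hρ
          exact ⟨⟨hc.1, by have := hc.2.2.2; have := hcov.2.2.2; omega⟩, hc, hne⟩
        · rintro ⟨-, hc, hne⟩
          exact ⟨hne, mem_downS.mpr hc⟩
      rw [hset, Finset.sum_filter]
    rw [Finset.sum_congr rfl h1, Finset.sum_comm]
    apply Finset.sum_congr rfl
    intro ρ _
    by_cases hc : CoversF (ρ ∩ l) ρ ∧ CoversF (ρ ∩ l) l ∧ ρ ≠ l
    · rw [if_pos hc]
      obtain ⟨h1', h2', hne⟩ := hc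
      obtain ⟨hcl, hcρ, -⟩ := quad2 h2' h1' hne
      rw [Finset.sum_eq_single_of_mem (ρ ∪ l) (mem_upS.mpr hcl) ?_]
      · rw [if_pos ⟨hcρ, hne⟩]
        have hud := hUD (ρ ∩ l) ρ l (ρ ∪ l) h1' hcρ h2' hcl hne
        have hbx : bx q2 l (ρ ∪ l) = bx q2 (ρ ∩ l) ρ := by
          rw [bx, bx, sdiff_union_inter]
        have hudC : (κ (ρ ∩ l) l : ℂ) * (κ (ρ ∩ l) ρ : ℂ)
            = (κ l (ρ ∪ l) : ℂ) * (κ ρ (ρ ∪ l) : ℂ) := by exact_mod_cast hud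
        rw [hbx]
        linear_combination (bx q2 (ρ ∩ l) ρ * (dimT κ ρ : ℂ)) * hudC.symm
      · intro ν hν hneq
        rw [if_neg]
        rintro ⟨hρν, hnel⟩
        exact hneq (quad1 (mem_upS.mp hν) hρν hnel).1
    · rw [if_neg hc]
      apply Finset.sum_eq_zero
      intro ν hν
      rw [if_neg]
      rintro ⟨hρν, hnel⟩
      obtain ⟨-, hq1, hq2⟩ := quad1 (mem_upS.mp hν) hρν hnel
      exact hc ⟨hq1, hq2, hnel⟩
  have crossB : ∑ μ ∈ downS l, ∑ ρ ∈ (upS hLF μ).erase l,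
        (κ μ l : ℂ) * ((κ μ ρ : ℂ) * bx q2 μ ρ * (dimT κ ρ : ℂ))
      = ∑ ρ ∈ A, if CoversF (ρ ∩ l) ρ ∧ CoversF (ρ ∩ l) l ∧ ρ ≠ l
          then (κ (ρ ∩ l) l : ℂ) *
            ((κ (ρ ∩ l) ρ : ℂ) * bx q2 (ρ ∩ l) ρ * (dimT κ ρ : ℂ)) else 0 := by
    have h1 : ∀ μ ∈ downS l,
        ∑ ρ ∈ (upS hLF μ).erase l, (κ μ l : ℂ) * ((κ μ ρ : ℂ) * bx q2 μ ρ * (dimT κ ρ : ℂ))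
        = ∑ ρ ∈ A, if CoversF μ ρ ∧ ρ ≠ l
            then (κ μ l : ℂ) * ((κ μ ρ : ℂ) * bx q2 μ ρ * (dimT κ ρ : ℂ)) else 0 := by
      intro μ hμ
      have hcov : CoversF μ l := mem_downS.mp hμ
      have hset : (upS hLF μ).erase l = A.filter (fun ρ => CoversF μ ρ ∧ ρ ≠ l) := by
        ext ρ
        simp only [Finset.mem_erase, Finset.mem_filter, memA]
        constructor
        · rintro ⟨hne, hρ⟩
          have hc := mem_upS.mp hρ
          exact ⟨⟨hc.2.1, by have := hc.2.2.2; have := hcov.2.2.2; omega⟩, hc, hne⟩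
        · rintro ⟨-, hc, hne⟩
          exact ⟨hne, mem_upS.mpr hc⟩
      rw [hset, Finset.sum_filter]
    rw [Finset.sum_congr rfl h1, Finset.sum_comm]
    apply Finset.sum_congr rfl
    intro ρ _
    by_cases hc : CoversF (ρ ∩ l) ρ ∧ CoversF (ρ ∩ l) l ∧ ρ ≠ l
    · rw [if_pos hc]
      rw [Finset.sum_eq_single_of_mem (ρ ∩ l) (mem_downS.mpr hc.2.1) ?_]
      · rw [if_pos ⟨hc.1, hc.2.2⟩]
      · intro μ hμ hneq
        rw [if_neg]
        rintro ⟨hμρ, hnel⟩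
        exact hneq (quad2 (mem_downS.mp hμ) hμρ hnel).2.2
    · rw [if_neg hc]
      apply Finset.sum_eq_zero
      intro μ hμ
      rw [if_neg]
      rintro ⟨hμρ, hnel⟩
      have h3 := (quad2 (mem_downS.mp hμ) hμρ hnel).2.2
      exact hc ⟨h3 ▸ hμρ, h3 ▸ mem_downS.mp hμ, hnel⟩
  -- evaluate crossB's inner sums via the induction hypothesis
  have crossC : ∑ μ ∈ downS l, ∑ ρ ∈ (upS hLF μ).erase l,
        (κ μ l : ℂ) * ((κ μ ρ : ℂ) * bx q2 μ ρ * (dimT κ ρ : ℂ))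
      = ((n : ℂ) * ((n : ℂ) - 1 + t)) * (∑ μ ∈ downS l, (κ μ l : ℂ) * (dimT κ μ : ℂ))
        - (dimT κ l : ℂ) * (∑ μ ∈ downS l, (κ μ l : ℂ) ^ 2 * bx q2 μ l) := by
    rw [Finset.mul_sum, Finset.mul_sum, ← Finset.sum_sub_distrib]
    apply Finset.sum_congr rfl
    intro μ hμ
    have hcov : CoversF μ l := mem_downS.mp hμ
    have hcnat : μ.card + 1 = n := by rw [← hcard, hcov.2.2.2]
    have hlt : μ.card < n := by omega
    have hIH := IH μ.card hlt μ hcov.1 rfl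
    have herase := Finset.sum_erase_add (upS hLF μ)
      (fun ρ => (κ μ ρ : ℂ) * bx q2 μ ρ * (dimT κ ρ : ℂ)) (mem_upS.mpr hcov)
    have hinner : ∑ ρ ∈ (upS hLF μ).erase l, (κ μ ρ : ℂ) * bx q2 μ ρ * (dimT κ ρ : ℂ)
        = ((μ.card : ℂ) + 1) * ((μ.card : ℂ) + t) * (dimT κ μ : ℂ)
          - (κ μ l : ℂ) * bx q2 μ l * (dimT κ l : ℂ) := by
      rw [← hIH]
      exact eq_sub_of_add_eq herase
    rw [← Finset.mul_sum, hinner]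
    have hcC : (μ.card : ℂ) + 1 = (n : ℂ) := by exact_mod_cast hcnat
    linear_combination ((κ μ l : ℂ) * (dimT κ μ : ℂ) * ((n : ℂ) + (μ.card : ℂ) + t)) * hcC
  -- the down-sum of κ·dim equals dim (trivial if n = 0)
  have hD : ((n : ℂ) * ((n : ℂ) - 1 + t)) * (∑ μ ∈ downS l, (κ μ l : ℂ) * (dimT κ μ : ℂ))
      = ((n : ℂ) * ((n : ℂ) - 1 + t)) * (dimT κ l : ℂ) := by
    rcases Nat.eq_zero_or_pos n with h0 | hpos
    · subst h0; simp
    · congr 1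
      have hne : l.Nonempty := Finset.card_pos.mp (by omega)
      have := dimT_rec κ hl hne
      rw [this]
      push_cast
      rfl
  rw [step1, crossA, ← crossB, crossC]
  linear_combination (dimT κ l : ℂ) * hKer + hD
end Main
section Final
variable {P : Type*} [PartialOrder P]
variable {κ : Finset P → Finset P → ℝ} {q2 : P → ℂ} {t : ℂ}

lemma totalT (hLF : LevelsFinite P) (hUD : UDSelfDual κ) (hK : KerovCond κ q2 t) :
    ∀ n : ℕ, ∑ l ∈ (hLF n).toFinset, (dimT κ l : ℂ) ^ 2 * ∏ x ∈ l, q2 x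
      = (n.factorial : ℂ) * Polynomial.eval t (ascPochhammer ℂ n) := by
  intro n
  induction n with
  | zero =>
    have hset : (hLF 0).toFinset = {(∅ : Finset P)} := by
      ext l
      simp only [Set.Finite.mem_toFinset, Set.mem_setOf_eq, Finset.mem_singleton,
        Finset.card_eq_zero]
      exact ⟨fun h => h.2, fun h => ⟨h ▸ isIdealF_empty, h⟩⟩
    rw [hset]
    simp [dimT_empty, ascPochhammer_zero]
  | succ n ih =>
    have memA : ∀ m (ρ : Finset P), ρ ∈ (hLF m).toFinset ↔ IsIdealF ρ ∧ ρ.card = m := by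
      intro m ρ; simp [Set.Finite.mem_toFinset]
    have hrw : ∀ ν ∈ (hLF (n+1)).toFinset,
        (dimT κ ν : ℂ) ^ 2 * ∏ x ∈ ν, q2 x
        = ∑ μ ∈ (hLF n).toFinset, if CoversF μ ν
            then (κ μ ν : ℂ) * (dimT κ μ : ℂ) * (dimT κ ν : ℂ) * ∏ x ∈ ν, q2 x else 0 := by
      intro ν hν
      obtain ⟨hid, hc⟩ := (memA (n+1) ν).mp hν
      have hnem : ν.Nonempty := Finset.card_pos.mp (by omega)
      have hrec : (dimT κ ν : ℂ) = ∑ μ ∈ downS ν, (κ μ ν : ℂ) * (dimT κ μ : ℂ) := by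
        rw [dimT_rec κ hid hnem]; push_cast; rfl
      have hset : downS ν = (hLF n).toFinset.filter (fun μ => CoversF μ ν) := by
        ext μ
        simp only [mem_downS, Finset.mem_filter, memA]
        exact ⟨fun h => ⟨⟨h.1, by have := h.2.2.2; omega⟩, h⟩, fun h => h.2⟩
      calc (dimT κ ν : ℂ) ^ 2 * ∏ x ∈ ν, q2 x
          = (∑ μ ∈ downS ν, (κ μ ν : ℂ) * (dimT κ μ : ℂ)) * ((dimT κ ν : ℂ) * ∏ x ∈ ν, q2 x) := by
            rw [← hrec]; ring
        _ = ∑ μ ∈ downS ν, (κ μ ν : ℂ) * (dimT κ μ : ℂ) * (dimT κ ν : ℂ) * ∏ x ∈ ν, q2 x := by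
            rw [Finset.sum_mul]; apply Finset.sum_congr rfl; intro μ _; ring
        _ = _ := by rw [hset, Finset.sum_filter]
    rw [Finset.sum_congr rfl hrw, Finset.sum_comm]
    have hinner : ∀ μ ∈ (hLF n).toFinset,
        (∑ ν ∈ (hLF (n+1)).toFinset, if CoversF μ ν
          then (κ μ ν : ℂ) * (dimT κ μ : ℂ) * (dimT κ ν : ℂ) * ∏ x ∈ ν, q2 x else 0)
        = ((n : ℂ) + 1) * ((n : ℂ) + t) * ((dimT κ μ : ℂ) ^ 2 * ∏ x ∈ μ, q2 x) := by
      intro μ hμ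
      obtain ⟨hid, hc⟩ := (memA n μ).mp hμ
      have hset : (hLF (n+1)).toFinset.filter (fun ν => CoversF μ ν) = upS hLF μ := by
        ext ν
        simp only [Finset.mem_filter, memA, mem_upS]
        exact ⟨fun h => h.2, fun h => ⟨⟨h.2.1, by have := h.2.2.2; omega⟩, h⟩⟩
      rw [← Finset.sum_filter, hset]
      have hterm : ∀ ν ∈ upS hLF μ,
          (κ μ ν : ℂ) * (dimT κ μ : ℂ) * (dimT κ ν : ℂ) * ∏ x ∈ ν, q2 x
          = ((dimT κ μ : ℂ) * ∏ x ∈ μ, q2 x) * ((κ μ ν : ℂ) * bx q2 μ ν * (dimT κ ν : ℂ)) := by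
        intro ν hν
        rw [prod_cover q2 (mem_upS.mp hν)]
        ring
      rw [Finset.sum_congr rfl hterm, ← Finset.mul_sum, key hLF hUD hK n μ hid hc]
      ring
    rw [Finset.sum_congr rfl hinner, ← Finset.mul_sum, ih]
    rw [ascPochhammer_succ_right, Polynomial.eval_mul, Nat.factorial_succ]
    push_cast
    simp only [Polynomial.eval_add, Polynomial.eval_X, Polynomial.eval_natCast]
    ring

lemma poch_ne_zero (ht : ∀ k : ℕ, t ≠ -(k : ℂ)) (n : ℕ) :
    Polynomial.eval t (ascPochhammer ℂ n) ≠ 0 := by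
  induction n with
  | zero => simp [ascPochhammer_zero]
  | succ n ih =>
    rw [ascPochhammer_succ_right, Polynomial.eval_mul]
    refine mul_ne_zero ih ?_
    simp only [Polynomial.eval_add, Polynomial.eval_X, Polynomial.eval_natCast]
    intro h
    exact ht n (by linear_combination h)

end Final
/-- the measures `M_n` are probability measures (total mass `1`) and form a
coherent system: `Σ_{ν ↘ λ} M_{n+1}(ν) κ(λ,ν) dim λ / dim ν = M_n(λ)`. -/
theorem statement5 {P : Type*} [PartialOrder P]
    (κ : Finset P → Finset P → ℝ) (q2 : P → ℂ) (t : ℂ)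
    (hκ : EdgePositive κ) (hLF : LevelsFinite P) (hUD : UDSelfDual κ)
    (hK : KerovCond κ q2 t) (ht : ∀ k : ℕ, t ≠ -(k : ℂ)) :
    (∀ n : ℕ, ∑' l : Lvl P n, McohC κ q2 t l.1 = 1) ∧
    (∀ n : ℕ, ∀ l : Finset P, IsIdealF l → l.card = n →
      ∑' ν : {ν : Finset P // CoversF l ν},
          McohC κ q2 t ν.1 * ((κ l ν.1 * dimT κ l / dimT κ ν.1 : ℝ) : ℂ)
        = McohC κ q2 t l) := by
  classical
  constructor
  · -- total mass 1
    intro n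
    have hts : ∑' l : Lvl P n, McohC κ q2 t l.1
        = ∑ l ∈ (hLF n).toFinset, McohC κ q2 t l :=
      tsum_finset (p := fun s => IsIdealF s ∧ s.card = n)
        (fun l => by simp [Set.Finite.mem_toFinset]) _
    rw [hts]
    have hcongr : ∀ l ∈ (hLF n).toFinset, McohC κ q2 t l
        = (dimT κ l : ℂ) ^ 2 * (∏ x ∈ l, q2 x) /
            ((n.factorial : ℂ) * Polynomial.eval t (ascPochhammer ℂ n)) := by
      intro l hl
      have hc : l.card = n := by
        rw [Set.Finite.mem_toFinset] at hl
        exact hl.2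
      rw [McohC, hc]
    rw [Finset.sum_congr rfl hcongr, ← Finset.sum_div, totalT hLF hUD hK n]
    exact div_self (mul_ne_zero (by exact_mod_cast n.factorial_ne_zero)
      (poch_ne_zero ht n))
  · -- coherency
    intro n l hl hcard
    subst hcard
    have hts : ∑' ν : {ν : Finset P // CoversF l ν},
          McohC κ q2 t ν.1 * ((κ l ν.1 * dimT κ l / dimT κ ν.1 : ℝ) : ℂ)
        = ∑ ν ∈ upS hLF l,
            McohC κ q2 t ν * ((κ l ν * dimT κ l / dimT κ ν : ℝ) : ℂ) :=
      tsum_up hLF l (fun ν => McohC κ q2 t ν * ((κ l ν * dimT κ l / dimT κ ν : ℝ) : ℂ))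
    rw [hts]
    set n := l.card with hn
    have hterm : ∀ ν ∈ upS hLF l,
        McohC κ q2 t ν * ((κ l ν * dimT κ l / dimT κ ν : ℝ) : ℂ)
        = ((dimT κ l : ℂ) * ∏ x ∈ l, q2 x) * ((κ l ν : ℂ) * bx q2 l ν * (dimT κ ν : ℂ)) /
            (((n + 1).factorial : ℂ) * Polynomial.eval t (ascPochhammer ℂ (n + 1))) := by
      intro ν hν
      have hcov : CoversF l ν := mem_upS.mp hν
      have hc : ν.card = n + 1 := hcov.2.2.2
      rw [McohC, hc, prod_cover q2 hcov]
      push_cast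
      by_cases hd : (dimT κ ν : ℂ) = 0
      · rw [hd]; ring
      · have hf : (((n+1).factorial : ℕ) : ℂ) ≠ 0 := by
          exact_mod_cast (n+1).factorial_ne_zero
        have hp : Polynomial.eval t (ascPochhammer ℂ (n+1)) ≠ 0 := poch_ne_zero ht (n+1)
        field_simp [hd, hf, hp]
    rw [Finset.sum_congr rfl hterm, ← Finset.sum_div, ← Finset.mul_sum,
      key hLF hUD hK n l hl rfl]
    rw [McohC, ← hn, ascPochhammer_succ_right, Polynomial.eval_mul, Nat.factorial_succ]
    push_cast
    simp only [Polynomial.eval_add, Polynomial.eval_X, Polynomial.eval_natCast]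
    have h1 : ((n : ℂ) + 1) ≠ 0 := by
      intro h
      have h' : (((n+1) : ℕ) : ℂ) = 0 := by push_cast; linear_combination h
      exact Nat.succ_ne_zero n (by exact_mod_cast h')
    have h2 : Polynomial.eval t (ascPochhammer ℂ n) ≠ 0 := poch_ne_zero ht n
    have h3 : ((n.factorial : ℂ)) ≠ 0 := by exact_mod_cast n.factorial_ne_zero
    have h4 : (t + (n : ℂ)) ≠ 0 := by
      intro h; exact ht n (by linear_combination h)
    field_simp
    ring

end IdealGraph
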